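/- arXiv:1902.01134 — 2 statements merged into one kernel-verified Lean document; each statement's English description precedes it below -/
import Mathlib

section
/- Let |·|_c denote the cross norm on ℂ^n associated to the euclidean norm on ℝ^n, let ⟨z,ζ⟩ = Σ_j z_j ζ_j be the complex bilinear form on ℂ^n, and let |ζ| be the hermitian norm. (a) If ζ = e^{iθ}(a+ib) with θ ∈ ℝ, a, b ∈ ℝ^n, ⟨a,b⟩ = 0, and |b| ≤ |a|, then |a| = (1/√2)(|ζ|² + |⟨ζ,ζ⟩|)^{1/2}, |b| = (1/√2)(|ζ|² − |⟨ζ,ζ⟩|)^{1/2}, and |ζ|_c = |a| + |b|. (b) For every ζ ∈ ℂ^n, writing ζ = ξ + iη with ξ, η ∈ ℝ^n, one has |ζ|_c = (|ζ|² + (|ζ|⁴ − |⟨ζ,ζ⟩|²)^{1/2})^{1/2} = (|ζ|² + 2(|ξ|²|η|² − ⟨ξ,η⟩²)^{1/2})^{1/2}. -/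
open scoped ENNReal RealInnerProductSpace BigOperators
open Filter MeasureTheory

noncomputable section

/-- ℂⁿ with the hermitian (euclidean) norm. -/
abbrev Cn (n : ℕ) := EuclideanSpace ℂ (Fin n)
/-- ℝⁿ with the euclidean norm. -/
abbrev Rn (n : ℕ) := EuclideanSpace ℝ (Fin n)

/-- The inclusion ℝⁿ ⊆ ℂⁿ. -/
def toCn {n : ℕ} (x : Rn n) : Cn n := WithLp.toLp 2 (fun i => (x i : ℂ))

/-- Evaluation of a polynomial on ℂⁿ at a point of ℂⁿ. -/
def evalP {n : ℕ} (p : MvPolynomial (Fin n) ℂ) (ζ : Cn n) : ℂ :=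
  MvPolynomial.eval (fun i => ζ i) p

/-- Siciak's homogeneous extremal function with weight `γ`:
`Ψ_{E,γ}(ζ) = sup{ |p(ζ)|^{1/k} : p homogeneous of degree k ≥ 1, |p|^{1/k} ≤ γ on E }`. -/
def siciak {n : ℕ} (E : Set (Cn n)) (γ : Cn n → ℝ) (ζ : Cn n) : ℝ≥0∞ :=
  ⨆ (p : MvPolynomial (Fin n) ℂ) (k : ℕ) (_ : p.IsHomogeneous k) (_ : 1 ≤ k)
    (_ : ∀ ξ ∈ E, ‖evalP p ξ‖ ^ (1 / (k : ℝ)) ≤ γ ξ),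
    ENNReal.ofReal (‖evalP p ζ‖ ^ (1 / (k : ℝ)))

/-- The upper semicontinuous regularization `Ψ^*(ζ) = limsup_{ϑ → ζ} Ψ(ϑ)`. -/
def siciakStar {n : ℕ} (E : Set (Cn n)) (γ : Cn n → ℝ) (ζ : Cn n) : ℝ≥0∞ :=
  Filter.limsup (siciak E γ) (nhds ζ)

/-- `E` has positive homogeneous capacity in the sense of Siciak:
`Ψ_E^*` is bounded above on the unit sphere of ℂⁿ. -/
def PosHomCapacity {n : ℕ} (E : Set (Cn n)) : Prop :=
  ∃ M : ℝ, ∀ ζ : Cn n, ‖ζ‖ = 1 → siciakStar E (fun _ => 1) ζ ≤ ENNReal.ofReal M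

end

noncomputable section

/-- The cross norm on ℂⁿ associated to a norm `ν` on ℝⁿ. -/
def crossNorm {n : ℕ} (ν : Rn n → ℝ) (ζ : Cn n) : ℝ :=
  sInf { s : ℝ | ∃ (N : ℕ) (α : Fin N → ℂ) (ω : Fin N → Rn n),
    ζ = ∑ j, α j • toCn (ω j) ∧ s = ∑ j, ‖α j‖ * ν (ω j) }

/-- The complex bilinear form `⟨z,ζ⟩ = Σ_j z_j ζ_j` on ℂⁿ. -/
def bform {n : ℕ} (z w : Cn n) : ℂ := ∑ j, z j * w j

/-- The real part `Re ζ ∈ ℝⁿ` of a point of ℂⁿ. -/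
def rePart {n : ℕ} (ζ : Cn n) : Rn n := WithLp.toLp 2 (fun i => (ζ i).re)

/-- The imaginary part `Im ζ ∈ ℝⁿ` of a point of ℂⁿ. -/
def imPart {n : ℕ} (ζ : Cn n) : Rn n := WithLp.toLp 2 (fun i => (ζ i).im)

lemma toCn_apply (x : Rn n) (i : Fin n) : toCn x i = (x i : ℂ) := rfl
lemma smul_apply' (c : ℂ) (z : Cn n) (i : Fin n) : (c • z) i = c * z i := rfl
lemma add_apply' (z w : Cn n) (i : Fin n) : (z + w) i = z i + w i := rfl

lemma w_decomp (z : Cn n) : z = toCn (rePart z) + Complex.I • toCn (imPart z) := by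
  ext i
  simp [toCn, rePart, imPart, add_apply', smul_apply']
  rw [mul_comm]
  exact (Complex.re_add_im (z i)).symm

lemma inner_real (x y : Rn n) : ⟪x,y⟫ = ∑ i, x i * y i := by
  simp [PiLp.inner_apply, RCLike.inner_apply, mul_comm]

lemma norm_sq_real (x : Rn n) : ‖x‖^2 = ∑ i, (x i)^2 := by
  rw [← real_inner_self_eq_norm_sq, inner_real]; simp [sq]

lemma bform_w (a b : Rn n) :
    bform (toCn a + Complex.I • toCn b) (toCn a + Complex.I • toCn b)
      = ((‖a‖^2 - ‖b‖^2 : ℝ) : ℂ) + ((2 * ⟪a,b⟫ : ℝ) : ℂ) * Complex.I := by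
  simp only [bform, add_apply', smul_apply', toCn_apply, norm_sq_real, inner_real]
  push_cast
  simp only [Finset.mul_sum, Finset.sum_mul, ← Finset.sum_sub_distrib, ← Finset.sum_add_distrib]
  refine Finset.sum_congr rfl fun i _ => ?_
  ring_nf
  rw [Complex.I_sq]
  ring

lemma normsq_w (a b : Rn n) :
    ‖toCn a + Complex.I • toCn b‖^2 = ‖a‖^2 + ‖b‖^2 := by
  rw [EuclideanSpace.norm_eq, Real.sq_sqrt (by positivity)]
  simp only [add_apply', smul_apply', toCn_apply, norm_sq_real]
  rw [← Finset.sum_add_distrib]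
  congr 1; ext i
  rw [Complex.sq_norm, Complex.normSq_apply]
  simp
  ring

lemma bform_smul (c : ℂ) (z : Cn n) : bform (c • z) (c • z) = c^2 * bform z z := by
  simp only [bform, smul_apply', Finset.mul_sum]
  exact Finset.sum_congr rfl fun i _ => by ring

lemma norm_exp_smul (θ : ℝ) (z : Cn n) : ‖Complex.exp (θ * Complex.I) • z‖ = ‖z‖ := by
  rw [norm_smul]
  simp [Complex.norm_exp]

-- rePart of (β • toCn ω) = β.re • ω
lemma rePart_smul (β : ℂ) (ω : Rn n) : rePart (β • toCn ω) = β.re • ω := by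
  ext i
  simp [rePart, smul_apply', toCn_apply, PiLp.smul_apply, smul_eq_mul]

lemma imPart_smul (β : ℂ) (ω : Rn n) : imPart (β • toCn ω) = β.im • ω := by
  ext i
  simp [imPart, smul_apply', toCn_apply, PiLp.smul_apply, smul_eq_mul]

lemma rePart_sum {N : ℕ} (f : Fin N → Cn n) : rePart (∑ j, f j) = ∑ j, rePart (f j) := by
  ext i
  have : (∑ j, f j) i = ∑ j, f j i := by
    rw [WithLp.ofLp_sum]; exact Finset.sum_apply i Finset.univ _
  show ((∑ j, f j) i).re = _
  have h2 : (∑ j, rePart (f j)) i = ∑ j, rePart (f j) i :=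
    by
    rw [WithLp.ofLp_sum]; exact Finset.sum_apply i Finset.univ _
  rw [this, Complex.re_sum, h2]
  rfl

lemma imPart_sum {N : ℕ} (f : Fin N → Cn n) : imPart (∑ j, f j) = ∑ j, imPart (f j) := by
  ext i
  have : (∑ j, f j) i = ∑ j, f j i := by
    rw [WithLp.ofLp_sum]; exact Finset.sum_apply i Finset.univ _
  show ((∑ j, f j) i).im = _
  have h2 : (∑ j, imPart (f j)) i = ∑ j, imPart (f j) i :=
    by
    rw [WithLp.ofLp_sum]; exact Finset.sum_apply i Finset.univ _
  rw [this, Complex.im_sum, h2]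
  rfl



lemma rePart_w (a b : Rn n) : rePart (toCn a + Complex.I • toCn b) = a := by
  ext i; simp [rePart, add_apply', smul_apply', toCn_apply]

lemma imPart_w (a b : Rn n) : imPart (toCn a + Complex.I • toCn b) = b := by
  ext i; simp [imPart, add_apply', smul_apply', toCn_apply]

lemma key_norm_le (u v : Rn n) (hu : ‖u‖ = 1) (hv : ‖v‖ ≤ 1) (huv : ⟪u,v⟫ = 0)
    (p q : ℝ) : ‖p • u + q • v‖^2 ≤ p^2 + q^2 := by
  rw [norm_add_sq_real, norm_smul, norm_smul, real_inner_smul_left, real_inner_smul_right, huv]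
  simp only [mul_zero, add_zero, mul_pow, hu, Real.norm_eq_abs, sq_abs, one_pow, mul_one]
  have h1 : ‖v‖^2 ≤ 1 := by nlinarith [norm_nonneg v]
  nlinarith [sq_nonneg q]

lemma lower_bound (θ : ℝ) (a b : Rn n) (hab : ⟪a,b⟫ = 0) (hba : ‖b‖ ≤ ‖a‖)
    {N : ℕ} (α : Fin N → ℂ) (ω : Fin N → Rn n)
    (hdec : Complex.exp (θ*Complex.I) • (toCn a + Complex.I • toCn b)
      = ∑ j, α j • toCn (ω j)) :
    ‖a‖ + ‖b‖ ≤ ∑ j, ‖α j‖ * ‖ω j‖ := by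
  by_cases ha : a = 0
  · have hb : b = 0 := by
      rw [ha] at hba; simpa using hba
    rw [ha, hb]
    simp only [norm_zero, add_zero]
    exact Finset.sum_nonneg fun j _ => mul_nonneg (norm_nonneg _) (norm_nonneg _)
  · have hna : (0:ℝ) < ‖a‖ := norm_pos_iff.mpr ha
    obtain ⟨u, v, hu, hv, huv, hua, hvb⟩ :
        ∃ u v : Rn n, ‖u‖ = 1 ∧ ‖v‖ ≤ 1 ∧ ⟪u,v⟫ = 0 ∧ ⟪u,a⟫ = ‖a‖ ∧ ⟪v,b⟫ = ‖b‖ := by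
      have hu1 : ‖(‖a‖⁻¹ • a : Rn n)‖ = 1 := by
        rw [norm_smul, Real.norm_eq_abs, abs_of_pos (by positivity)]
        exact inv_mul_cancel₀ hna.ne'
      have hua1 : ⟪(‖a‖⁻¹ • a : Rn n), a⟫ = ‖a‖ := by
        rw [real_inner_smul_left, real_inner_self_eq_norm_sq]
        field_simp
      by_cases hb : b = 0
      · exact ⟨‖a‖⁻¹ • a, 0, hu1, by simp, by simp, hua1, by simp [hb]⟩
      · have hnb : (0:ℝ) < ‖b‖ := norm_pos_iff.mpr hb
        refine ⟨‖a‖⁻¹ • a, ‖b‖⁻¹ • b, hu1, ?_, ?_, hua1, ?_⟩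
        · rw [norm_smul, Real.norm_eq_abs, abs_of_pos (by positivity),
            inv_mul_cancel₀ hnb.ne']
        · rw [real_inner_smul_left, real_inner_smul_right, hab]; ring
        · rw [real_inner_smul_left, real_inner_self_eq_norm_sq]
          field_simp
    set β : Fin N → ℂ := fun j => Complex.exp (-(θ*Complex.I)) * α j with hβ_def
    have hw : toCn a + Complex.I • toCn b = ∑ j, β j • toCn (ω j) := by
      have h1 : Complex.exp (-(θ*Complex.I)) •
          (Complex.exp (θ*Complex.I) • (toCn a + Complex.I • toCn b))
          = toCn a + Complex.I • toCn b := by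
        rw [smul_smul, ← Complex.exp_add]; simp
      rw [← h1, hdec, Finset.smul_sum]
      exact Finset.sum_congr rfl fun j _ => (smul_smul _ _ _)
    have hare : a = ∑ j, (β j).re • ω j := by
      calc a = rePart (toCn a + Complex.I • toCn b) := (rePart_w a b).symm
      _ = ∑ j, rePart ((β j) • toCn (ω j)) := by rw [hw, rePart_sum]
      _ = ∑ j, (β j).re • ω j := by simp only [rePart_smul]
    have hbre : b = ∑ j, (β j).im • ω j := by
      calc b = imPart (toCn a + Complex.I • toCn b) := (imPart_w a b).symm
      _ = ∑ j, imPart ((β j) • toCn (ω j)) := by rw [hw, imPart_sum]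
      _ = ∑ j, (β j).im • ω j := by simp only [imPart_smul]
    have habs : ∀ j, ‖β j‖ = ‖α j‖ := by
      intro j
      rw [hβ_def]
      simp [Complex.norm_exp]
    have key : ‖a‖ + ‖b‖ = ∑ j, ⟪(β j).re • u + (β j).im • v, ω j⟫ := by
      have h2 : ⟪u, a⟫ = ∑ j, (β j).re * ⟪u, ω j⟫ := by
        conv_lhs => rw [hare]
        rw [inner_sum]
        exact Finset.sum_congr rfl fun j _ => real_inner_smul_right u _ _
      have h3 : ⟪v, b⟫ = ∑ j, (β j).im * ⟪v, ω j⟫ := by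
        conv_lhs => rw [hbre]
        rw [inner_sum]
        exact Finset.sum_congr rfl fun j _ => real_inner_smul_right v _ _
      rw [← hua, ← hvb, h2, h3, ← Finset.sum_add_distrib]
      refine Finset.sum_congr rfl fun j _ => ?_
      rw [inner_add_left, real_inner_smul_left, real_inner_smul_left]

    rw [key]
    refine Finset.sum_le_sum fun j _ => ?_
    have h4 : ⟪(β j).re • u + (β j).im • v, ω j⟫ ≤ ‖(β j).re • u + (β j).im • v‖ * ‖ω j‖ :=
      real_inner_le_norm _ _
    have h5 : ‖(β j).re • u + (β j).im • v‖ ≤ ‖β j‖ := by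
      have h6 := key_norm_le u v hu hv huv (β j).re (β j).im
      have h7 : (β j).re^2 + (β j).im^2 = ‖β j‖^2 := by
        rw [Complex.sq_norm, Complex.normSq_apply]; ring
      nlinarith [norm_nonneg ((β j).re • u + (β j).im • v), norm_nonneg (β j)]
    calc ⟪(β j).re • u + (β j).im • v, ω j⟫ ≤ ‖(β j).re • u + (β j).im • v‖ * ‖ω j‖ := h4
    _ ≤ ‖β j‖ * ‖ω j‖ := mul_le_mul_of_nonneg_right h5 (norm_nonneg _)
    _ = ‖α j‖ * ‖ω j‖ := by rw [habs]


lemma toCn_add (x y : Rn n) : toCn (x + y) = toCn x + toCn y := by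
  ext i; simp [toCn, add_apply', PiLp.add_apply]

lemma toCn_smul (r : ℝ) (x : Rn n) : toCn (r • x) = (r:ℂ) • toCn x := by
  ext i; simp [toCn, smul_apply', PiLp.smul_apply, smul_eq_mul]

lemma upper_mem (θ : ℝ) (a b : Rn n) (hab : ⟪a,b⟫ = 0) (hba : ‖b‖ ≤ ‖a‖) :
    ∃ (N : ℕ) (α : Fin N → ℂ) (ω : Fin N → Rn n),
      Complex.exp (θ*Complex.I) • (toCn a + Complex.I • toCn b)
        = ∑ j, α j • toCn (ω j) ∧
      ‖a‖ + ‖b‖ = ∑ j, ‖α j‖ * ‖ω j‖ := by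
  by_cases hb : b = 0
  · refine ⟨1, fun _ => Complex.exp (θ*Complex.I), fun _ => a, ?_, ?_⟩
    · simp [hb, toCn]
      ext i
      simp [smul_apply', toCn]
    · simp [hb, Complex.norm_exp]
  · have hnb : (0:ℝ) < ‖b‖ := norm_pos_iff.mpr hb
    have hna : (0:ℝ) < ‖a‖ := lt_of_lt_of_le hnb hba
    set c := ‖a‖
    set d := ‖b‖
    set t : ℝ := Real.sqrt (c/d) with ht_def
    have htpos : 0 < t := Real.sqrt_pos.mpr (by positivity)
    have ht2 : t^2 = c/d := Real.sq_sqrt (by positivity)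
    have htc : (t:ℂ) ≠ 0 := by exact_mod_cast htpos.ne'
    set α₁ : ℂ := Complex.exp (θ*Complex.I) * (1 + (t⁻¹:ℝ) * Complex.I)/2 with hα₁
    set α₂ : ℂ := Complex.exp (θ*Complex.I) * (1 - (t⁻¹:ℝ) * Complex.I)/2 with hα₂
    refine ⟨2, ![α₁, α₂], ![a + t • b, a - t • b], ?_, ?_⟩
    · rw [Fin.sum_univ_two]
      simp only [Matrix.cons_val_zero, Matrix.cons_val_one, Matrix.head_cons]
      ext i
      simp only [smul_apply', add_apply', toCn_apply, PiLp.add_apply, PiLp.sub_apply,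
        PiLp.smul_apply, smul_eq_mul, hα₁, hα₂]
      push_cast
      field_simp
      ring
    · rw [Fin.sum_univ_two]
      simp only [Matrix.cons_val_zero, Matrix.cons_val_one, Matrix.head_cons]
      have hω₁ : ‖a + t • b‖ = Real.sqrt (c^2 + t^2 * d^2) := by
        rw [← Real.sqrt_sq (norm_nonneg _)]
        congr 1
        rw [norm_add_sq_real, real_inner_smul_right, hab, norm_smul, Real.norm_eq_abs,
          abs_of_pos htpos, mul_pow]
        ring
      have hω₂ : ‖a - t • b‖ = Real.sqrt (c^2 + t^2 * d^2) := by
        rw [← Real.sqrt_sq (norm_nonneg _)]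
        congr 1
        rw [norm_sub_sq_real, real_inner_smul_right, hab, norm_smul, Real.norm_eq_abs,
          abs_of_pos htpos, mul_pow]
        ring
      have habs₁ : ‖α₁‖ = Real.sqrt (1 + (t⁻¹)^2) / 2 := by
        rw [hα₁, norm_div, norm_mul, Complex.norm_exp,
          show ((1:ℂ) + (t⁻¹:ℝ) * Complex.I) = ((1:ℝ):ℂ) + (t⁻¹:ℝ) * Complex.I by push_cast; ring,
          Complex.norm_add_mul_I]
        norm_num
      have habs₂ : ‖α₂‖ = Real.sqrt (1 + (t⁻¹)^2) / 2 := by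
        rw [hα₂, norm_div, norm_mul, Complex.norm_exp,
          show ((1:ℂ) - (t⁻¹:ℝ) * Complex.I) = ((1:ℝ):ℂ) + (-(t⁻¹):ℝ) * Complex.I by push_cast; ring,
          Complex.norm_add_mul_I]
        norm_num
      rw [hω₁, hω₂, habs₁, habs₂]
      have hcomb : Real.sqrt (1 + (t⁻¹)^2) / 2 * Real.sqrt (c^2 + t^2*d^2)
          + Real.sqrt (1 + (t⁻¹)^2) / 2 * Real.sqrt (c^2 + t^2*d^2)
          = Real.sqrt ((1 + (t⁻¹)^2) * (c^2 + t^2*d^2)) := by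
        rw [Real.sqrt_mul (by positivity)]
        ring
      rw [hcomb]
      have harg : (1 + (t⁻¹)^2) * (c^2 + t^2*d^2) = (c+d)^2 := by
        have h1 : (t⁻¹)^2 = d/c := by
          rw [inv_pow, ht2]
          field_simp
        rw [h1, ht2]
        field_simp
      rw [harg, Real.sqrt_sq (by positivity)]



lemma crossNorm_eq (θ : ℝ) (a b : Rn n) (hab : ⟪a,b⟫ = 0) (hba : ‖b‖ ≤ ‖a‖) :
    crossNorm (fun x => ‖x‖)
      (Complex.exp (θ*Complex.I) • (toCn a + Complex.I • toCn b)) = ‖a‖ + ‖b‖ := by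
  set ζ := Complex.exp (θ*Complex.I) • (toCn a + Complex.I • toCn b) with hζ
  have hmem : (‖a‖ + ‖b‖) ∈ { s : ℝ | ∃ (N : ℕ) (α : Fin N → ℂ) (ω : Fin N → Rn n),
      ζ = ∑ j, α j • toCn (ω j) ∧ s = ∑ j, ‖α j‖ * ‖ω j‖ } := by
    obtain ⟨N, α, ω, h1, h2⟩ := upper_mem θ a b hab hba
    exact ⟨N, α, ω, h1, h2⟩
  have hlb : ∀ s ∈ { s : ℝ | ∃ (N : ℕ) (α : Fin N → ℂ) (ω : Fin N → Rn n),
      ζ = ∑ j, α j • toCn (ω j) ∧ s = ∑ j, ‖α j‖ * ‖ω j‖ },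
      ‖a‖ + ‖b‖ ≤ s := by
    rintro s ⟨N, α, ω, h1, h2⟩
    rw [h2]
    exact lower_bound θ a b hab hba α ω h1
  exact le_antisymm (csInf_le ⟨‖a‖ + ‖b‖, hlb⟩ hmem) (le_csInf ⟨_, hmem⟩ hlb)

lemma normsq_zeta (θ : ℝ) (a b : Rn n) :
    ‖Complex.exp (θ*Complex.I) • (toCn a + Complex.I • toCn b)‖^2 = ‖a‖^2 + ‖b‖^2 := by
  rw [norm_exp_smul, normsq_w]

lemma abs_bform_zeta (θ : ℝ) (a b : Rn n) (hab : ⟪a,b⟫ = 0) (hba : ‖b‖ ≤ ‖a‖) :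
    ‖bform (Complex.exp (θ*Complex.I) • (toCn a + Complex.I • toCn b))
      (Complex.exp (θ*Complex.I) • (toCn a + Complex.I • toCn b))‖ = ‖a‖^2 - ‖b‖^2 := by
  rw [bform_smul, norm_mul, bform_w a b, hab]
  have h1 : ‖Complex.exp (θ*Complex.I)^2‖ = 1 := by
    rw [norm_pow, Complex.norm_exp]
    simp
  rw [h1, one_mul]
  simp only [mul_zero, Complex.ofReal_zero, zero_mul, add_zero]
  rw [Complex.norm_real, Real.norm_eq_abs, abs_of_nonneg]
  nlinarith [norm_nonneg a, norm_nonneg b]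

/-- Theorem 2.6: explicit formulas for the cross norm of the euclidean norm. -/
theorem crossNorm_formulas {n : ℕ} :
    -- (a)
    (∀ (θ : ℝ) (a b : Rn n) (ζ : Cn n), ⟪a, b⟫ = 0 → ‖b‖ ≤ ‖a‖ →
      ζ = Complex.exp (θ * Complex.I) • (toCn a + Complex.I • toCn b) →
      ‖a‖ = (1 / Real.sqrt 2) * Real.sqrt (‖ζ‖ ^ 2 + ‖bform ζ ζ‖) ∧
      ‖b‖ = (1 / Real.sqrt 2) * Real.sqrt (‖ζ‖ ^ 2 - ‖bform ζ ζ‖) ∧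
      crossNorm (fun x => ‖x‖) ζ = ‖a‖ + ‖b‖) ∧
    -- (b)
    (∀ ζ : Cn n,
      crossNorm (fun x => ‖x‖) ζ =
        Real.sqrt (‖ζ‖ ^ 2 + Real.sqrt (‖ζ‖ ^ 4 - ‖bform ζ ζ‖ ^ 2)) ∧
      crossNorm (fun x => ‖x‖) ζ =
        Real.sqrt (‖ζ‖ ^ 2 +
          2 * Real.sqrt (‖rePart ζ‖ ^ 2 * ‖imPart ζ‖ ^ 2 - ⟪rePart ζ, imPart ζ⟫ ^ 2))) := by
  constructor
  · rintro θ a b ζ hab hba rfl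
    refine ⟨?_, ?_, crossNorm_eq θ a b hab hba⟩
    · rw [normsq_zeta, abs_bform_zeta θ a b hab hba,
        show ‖a‖^2 + ‖b‖^2 + (‖a‖^2 - ‖b‖^2) = (Real.sqrt 2 * ‖a‖)^2 by
          rw [mul_pow, Real.sq_sqrt (by norm_num : (0:ℝ) ≤ 2)]; ring,
        Real.sqrt_sq (by positivity)]
      have h2 : Real.sqrt 2 ≠ 0 := by positivity
      field_simp
    · rw [normsq_zeta, abs_bform_zeta θ a b hab hba,
        show ‖a‖^2 + ‖b‖^2 - (‖a‖^2 - ‖b‖^2) = (Real.sqrt 2 * ‖b‖)^2 by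
          rw [mul_pow, Real.sq_sqrt (by norm_num : (0:ℝ) ≤ 2)]; ring,
        Real.sqrt_sq (by positivity)]
      have h2 : Real.sqrt 2 ≠ 0 := by positivity
      field_simp
  · intro ζ
    -- construct the canonical rotation
    set θ : ℝ := (bform ζ ζ).arg / 2 with hθ
    set w : Cn n := Complex.exp (-(θ*Complex.I)) • ζ with hw
    set a : Rn n := rePart w with ha
    set b : Rn n := imPart w with hb
    have hwdec : w = toCn a + Complex.I • toCn b := w_decomp w
    have hζw : ζ = Complex.exp (θ*Complex.I) • (toCn a + Complex.I • toCn b) := by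
      rw [← hwdec, hw, smul_smul, ← Complex.exp_add]
      simp
    have hbw : bform w w = ((‖bform ζ ζ‖ : ℝ) : ℂ) := by
      rw [hw, bform_smul, ← Complex.exp_nat_mul]
      have harg : (2:ℕ) * (-(↑θ*Complex.I)) = -(((bform ζ ζ).arg : ℂ) * Complex.I) := by
        rw [hθ]; push_cast; ring
      rw [harg]
      nth_rewrite 2 [← Complex.norm_mul_exp_arg_mul_I (bform ζ ζ)]
      rw [mul_comm, mul_assoc, ← Complex.exp_add]
      simp
    have hbw2 : ((‖a‖^2 - ‖b‖^2 : ℝ) : ℂ) + ((2 * ⟪a,b⟫ : ℝ) : ℂ) * Complex.I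
        = ((‖bform ζ ζ‖ : ℝ) : ℂ) := by
      rw [← bform_w, ← hwdec]
      exact hbw
    have hgen : ∀ (X Y R : ℝ), ((X:ℂ) + (Y:ℂ)*Complex.I = (R:ℂ)) → X = R ∧ Y = 0 := by
      intro X Y R h
      rw [Complex.ext_iff] at h
      simpa using h
    have hre : ‖a‖^2 - ‖b‖^2 = ‖bform ζ ζ‖ ∧ 2 * ⟪a,b⟫ = 0 :=
      hgen _ _ _ hbw2
    have hab : ⟪a,b⟫ = 0 := by linarith [hre.2]
    have hba : ‖b‖ ≤ ‖a‖ := by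
      nlinarith [hre.1, norm_nonneg (bform ζ ζ), norm_nonneg a, norm_nonneg b]
    have hcross : crossNorm (fun x => ‖x‖) ζ = ‖a‖ + ‖b‖ := by
      rw [hζw]; exact crossNorm_eq θ a b hab hba
    have hS : ‖ζ‖^2 = ‖a‖^2 + ‖b‖^2 := by
      conv_lhs => rw [hζw]
      rw [normsq_zeta]
    have hA : ‖bform ζ ζ‖ = ‖a‖^2 - ‖b‖^2 := hre.1.symm
    have hform1 : crossNorm (fun x => ‖x‖) ζ =
        Real.sqrt (‖ζ‖ ^ 2 + Real.sqrt (‖ζ‖ ^ 4 - ‖bform ζ ζ‖ ^ 2)) := by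
      rw [show ‖ζ‖^4 - ‖bform ζ ζ‖^2 = (2*‖a‖*‖b‖)^2 by
          rw [show ‖ζ‖^4 = (‖ζ‖^2)^2 by ring, hS, hA]; ring,
        Real.sqrt_sq (by positivity), hS,
        show ‖a‖^2 + ‖b‖^2 + 2*‖a‖*‖b‖ = (‖a‖+‖b‖)^2 by ring,
        Real.sqrt_sq (by positivity)]
      exact hcross
    refine ⟨hform1, ?_⟩
    have key2 : ‖ζ‖^4 - ‖bform ζ ζ‖^2
        = 4*(‖rePart ζ‖^2*‖imPart ζ‖^2 - ⟪rePart ζ, imPart ζ⟫^2) := by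
      have h5 : ‖ζ‖^2 = ‖rePart ζ‖^2 + ‖imPart ζ‖^2 := by
        conv_lhs => rw [w_decomp ζ]
        rw [normsq_w]
      have h6 : ‖bform ζ ζ‖^2
          = (‖rePart ζ‖^2 - ‖imPart ζ‖^2)^2 + (2*⟪rePart ζ, imPart ζ⟫)^2 := by
        conv_lhs => rw [w_decomp ζ]
        rw [bform_w, Complex.sq_norm, Complex.normSq_apply]
        simp only [Complex.add_re, Complex.ofReal_re, Complex.mul_re, Complex.I_re,
          Complex.I_im, Complex.ofReal_im, Complex.add_im, Complex.mul_im]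
        ring
      rw [show ‖ζ‖^4 = (‖ζ‖^2)^2 by ring, h5, h6]; ring
    have hsq : Real.sqrt (‖ζ‖^4 - ‖bform ζ ζ‖^2)
        = 2 * Real.sqrt (‖rePart ζ‖^2*‖imPart ζ‖^2 - ⟪rePart ζ, imPart ζ⟫^2) := by
      rw [key2, show (4:ℝ)*(‖rePart ζ‖^2*‖imPart ζ‖^2 - ⟪rePart ζ, imPart ζ⟫^2)
          = 2^2*(‖rePart ζ‖^2*‖imPart ζ‖^2 - ⟪rePart ζ, imPart ζ⟫^2) by ring,
        Real.sqrt_mul (by positivity), Real.sqrt_sq (by norm_num)]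
    rw [hform1, hsq]

end
end

section
/- Let |·|_c denote the cross norm on ℂ^n associated to the euclidean norm on ℝ^n. Then |ζ| ≤ |ζ|_c ≤ √2·|ζ| for every ζ ∈ ℂ^n; moreover |ζ| = |ζ|_c if and only if ζ ∈ ℂℝ^n = { zξ : z ∈ ℂ, ξ ∈ ℝ^n }, and |ζ|_c = √2·|ζ| if and only if ⟨ζ,ζ⟩ = ζ_1² + ⋯ + ζ_n² = 0. -/
open scoped ENNReal RealInnerProductSpace BigOperators
open Filter MeasureTheory

noncomputable section

namespace CrossAux
variable {n : ℕ}

def DS (ζ : Cn n) : Set ℝ :=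
  { s : ℝ | ∃ (N : ℕ) (α : Fin N → ℂ) (ω : Fin N → Rn n),
    ζ = ∑ j, α j • toCn (ω j) ∧ s = ∑ j, ‖α j‖ * ‖ω j‖ }

lemma cn_eq (ζ : Cn n) : crossNorm (fun x => ‖x‖) ζ = sInf (DS ζ) := rfl

lemma norm_toCn (x : Rn n) : ‖toCn x‖ = ‖x‖ := by
  simp [EuclideanSpace.norm_eq, toCn]

lemma normsq_R (x : Rn n) : ‖x‖ ^ 2 = ∑ j, x j ^ 2 := by
  rw [EuclideanSpace.norm_eq, Real.sq_sqrt (by positivity)]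
  simp [Real.norm_eq_abs, sq_abs]

lemma normsq_C (ζ : Cn n) : ‖ζ‖ ^ 2 = ∑ j, ((ζ j).re ^ 2 + (ζ j).im ^ 2) := by
  rw [EuclideanSpace.norm_eq, Real.sq_sqrt (by positivity)]
  refine Finset.sum_congr rfl fun j _ => ?_
  rw [Complex.sq_norm, Complex.normSq_apply]; ring

lemma decomp (ζ : Cn n) :
    ζ = (1:ℂ) • toCn (WithLp.toLp 2 fun j => (ζ j).re) + Complex.I • toCn (WithLp.toLp 2 fun j => (ζ j).im) := by
  ext j
  simp only [PiLp.add_apply, PiLp.smul_apply, smul_eq_mul, toCn, one_mul, PiLp.toLp_apply]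
  rw [mul_comm]
  exact (Complex.re_add_im (ζ j)).symm

lemma DS_nonempty (ζ : Cn n) : (DS ζ).Nonempty := by
  refine ⟨_, 2, ![1, Complex.I], ![WithLp.toLp 2 fun j => (ζ j).re, WithLp.toLp 2 fun j => (ζ j).im], ?_, rfl⟩
  simpa [Fin.sum_univ_two] using decomp ζ

lemma DS_bddBelow (ζ : Cn n) : BddBelow (DS ζ) := by
  refine ⟨0, fun s hs => ?_⟩
  obtain ⟨N, α, ω, -, rfl⟩ := hs
  positivity

lemma norm_le_mem {ζ : Cn n} {s : ℝ} (hs : s ∈ DS ζ) : ‖ζ‖ ≤ s := by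
  obtain ⟨N, α, ω, h, rfl⟩ := hs
  calc ‖ζ‖ = ‖∑ j, α j • toCn (ω j)‖ := by rw [← h]
    _ ≤ ∑ j, ‖α j • toCn (ω j)‖ := norm_sum_le _ _
    _ = ∑ j, ‖α j‖ * ‖ω j‖ := by
        simp [norm_smul, norm_toCn]

lemma lower (ζ : Cn n) : ‖ζ‖ ≤ crossNorm (fun x => ‖x‖) ζ := by
  rw [cn_eq]; exact le_csInf (DS_nonempty ζ) fun s hs => norm_le_mem hs

lemma cn_le_mem {ζ : Cn n} {s : ℝ} (hs : s ∈ DS ζ) : crossNorm (fun x => ‖x‖) ζ ≤ s := by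
  rw [cn_eq]; exact csInf_le (DS_bddBelow ζ) hs

lemma B_re (a b : Rn n) (ζ : Cn n) :
    (∑ j, ζ j * ((a j : ℂ) - Complex.I * (b j : ℂ))).re
      = ∑ j, ((ζ j).re * a j + (ζ j).im * b j) := by
  rw [Complex.re_sum]
  exact Finset.sum_congr rfl fun j _ => by simp [Complex.mul_re]

lemma B_im (a b : Rn n) (ζ : Cn n) :
    (∑ j, ζ j * ((a j : ℂ) - Complex.I * (b j : ℂ))).im
      = ∑ j, ((ζ j).im * a j - (ζ j).re * b j) := by
  rw [Complex.im_sum]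
  exact Finset.sum_congr rfl fun j _ => by simp [Complex.mul_im]; ring

lemma abs_le_sqrt {z : ℂ} {r : ℝ} (h : z.re^2 + z.im^2 ≤ r^2) (hr : 0 ≤ r) :
    ‖z‖ ≤ r := by
  rw [Complex.norm_def, Complex.normSq_apply]
  calc Real.sqrt (z.re * z.re + z.im * z.im) ≤ Real.sqrt (r^2) := by
        apply Real.sqrt_le_sqrt; nlinarith
    _ = r := Real.sqrt_sq hr

lemma exists_u (c : ℂ) : ∃ u : ℂ, ‖u‖ = 1 ∧ u^2 * c = (‖c‖ : ℂ) := by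
  rcases eq_or_ne c 0 with rfl | hc
  · exact ⟨1, by simp, by simp⟩
  · refine ⟨Complex.exp ((-(c.arg/2) : ℝ) * Complex.I),
      Complex.norm_exp_ofReal_mul_I _, ?_⟩
    have h2 : (Complex.exp ((-(c.arg/2) : ℝ) * Complex.I))^2
        = Complex.exp ((-(c.arg) : ℝ) * Complex.I) := by
      rw [sq, ← Complex.exp_add]; congr 1; push_cast; ring
    have key : Complex.exp ((-(c.arg):ℝ) * Complex.I) * Complex.exp ((c.arg:ℝ) * Complex.I) = 1 := by
      rw [← Complex.exp_add]
      have : ((-(c.arg):ℝ) : ℂ) * Complex.I + ((c.arg:ℝ) : ℂ) * Complex.I = 0 := by push_cast; ring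
      rw [this, Complex.exp_zero]
    rw [h2]
    calc Complex.exp ((-(c.arg):ℝ)*Complex.I) * c
        = Complex.exp ((-(c.arg):ℝ)*Complex.I) * ((‖c‖ : ℂ) * Complex.exp ((c.arg:ℝ)*Complex.I)) := by
          rw [Complex.norm_mul_exp_arg_mul_I c]
      _ = (‖c‖ : ℂ) * (Complex.exp ((-(c.arg):ℝ)*Complex.I) * Complex.exp ((c.arg:ℝ)*Complex.I)) := by ring
      _ = _ := by rw [key]; ring

lemma bessel {a b ω : Rn n} (ha : ∑ j, a j^2 ≤ 1) (hb : ∑ j, b j^2 ≤ 1)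
    (hab : ∑ j, a j * b j = 0) :
    (∑ j, ω j * a j)^2 + (∑ j, ω j * b j)^2 ≤ ∑ j, ω j^2 := by
  set p := ∑ j, ω j * a j with hp
  set q := ∑ j, ω j * b j with hq
  have h0 : (0:ℝ) ≤ ∑ j, (ω j - p * a j - q * b j)^2 :=
    Finset.sum_nonneg fun _ _ => sq_nonneg _
  have hexp : ∑ j, (ω j - p * a j - q * b j)^2
      = (∑ j, ω j^2) - (2*p)*(∑ j, ω j * a j) - (2*q)*(∑ j, ω j * b j)
        + p^2 * (∑ j, a j^2) + q^2 * (∑ j, b j^2) + (2*p*q)*(∑ j, a j * b j) := by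
    have step : ∀ j : Fin n, (ω j - p * a j - q * b j)^2
        = ω j^2 - (2*p)*(ω j * a j) - (2*q)*(ω j * b j)
          + p^2 * (a j^2) + q^2 * (b j^2) + (2*p*q)*(a j * b j) := fun j => by ring
    rw [Finset.sum_congr rfl fun j _ => step j]
    simp only [Finset.sum_add_distrib, Finset.sum_sub_distrib, ← Finset.mul_sum]
  rw [hexp, ← hp, ← hq, hab] at h0
  nlinarith [sq_nonneg p, sq_nonneg q]

lemma dual_lb (a b : Rn n)
    (hbd : ∀ ω : Rn n, (∑ j, ω j * a j)^2 + (∑ j, ω j * b j)^2 ≤ ‖ω‖^2) (ζ : Cn n) :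
    ‖∑ j, ζ j * ((a j : ℂ) - Complex.I * (b j : ℂ))‖
      ≤ crossNorm (fun x => ‖x‖) ζ := by
  rw [cn_eq]
  refine le_csInf (DS_nonempty ζ) ?_
  rintro s ⟨N, α, ω, h, rfl⟩
  have hζ : ∀ j, ζ j = ∑ k, α k * (ω k j : ℂ) := by
    intro j; rw [h]
    rw [WithLp.ofLp_sum, Finset.sum_apply]
    exact Finset.sum_congr rfl fun k _ => rfl
  have hlin : ∑ j, ζ j * ((a j : ℂ) - Complex.I * (b j : ℂ))
      = ∑ k, α k * (∑ j, (ω k j : ℂ) * ((a j : ℂ) - Complex.I * (b j : ℂ))) := by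
    simp only [hζ, Finset.sum_mul, Finset.mul_sum]
    rw [Finset.sum_comm]
    exact Finset.sum_congr rfl fun k _ => Finset.sum_congr rfl fun j _ => by ring
  rw [hlin]
  calc ‖∑ k, α k * (∑ j, (ω k j : ℂ) * ((a j : ℂ) - Complex.I * (b j : ℂ)))‖
      ≤ ∑ k, ‖α k * (∑ j, (ω k j : ℂ) * ((a j : ℂ) - Complex.I * (b j : ℂ)))‖ :=
        norm_sum_le _ _
    _ ≤ ∑ k, ‖α k‖ * ‖ω k‖ := by
        refine Finset.sum_le_sum fun k _ => ?_
        rw [norm_mul]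
        refine mul_le_mul_of_nonneg_left ?_ (norm_nonneg _)
        refine abs_le_sqrt ?_ (norm_nonneg _)
        have e1 := B_re a b (toCn (ω k))
        have e2 := B_im a b (toCn (ω k))
        simp only [toCn, PiLp.toLp_apply] at e1 e2
        rw [e1, e2]
        have h1 : ∑ j, (((ω k j : ℂ)).re * a j + ((ω k j : ℂ)).im * b j) = ∑ j, ω k j * a j :=
          Finset.sum_congr rfl fun j _ => by simp
        have h2 : ∑ j, (((ω k j : ℂ)).im * a j - ((ω k j : ℂ)).re * b j) = ∑ j, -(ω k j * b j) :=
          Finset.sum_congr rfl fun j _ => by simp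
        rw [h1, h2, Finset.sum_neg_distrib]
        calc (∑ j, ω k j * a j)^2 + (-(∑ j, ω k j * b j))^2
            = (∑ j, ω k j * a j)^2 + (∑ j, ω k j * b j)^2 := by ring
          _ ≤ ‖ω k‖^2 := hbd (ω k)

lemma key (ζ : Cn n) : ∃ u : ℂ, ‖u‖ = 1 ∧
    (∑ j, (u * ζ j).re * (u * ζ j).im) = 0 ∧
    ((∑ j, (u * ζ j).re ^ 2) - (∑ j, (u * ζ j).im ^ 2)) = ‖bform ζ ζ‖ := by
  obtain ⟨u, hu, huc⟩ := exists_u (bform ζ ζ)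
  have hb : (∑ j, (u * ζ j) * (u * ζ j)) = ((‖bform ζ ζ‖ : ℝ) : ℂ) := by
    rw [← huc, bform, Finset.mul_sum]
    exact Finset.sum_congr rfl fun j _ => by ring
  have hre := congrArg Complex.re hb
  have him := congrArg Complex.im hb
  rw [Complex.re_sum] at hre
  rw [Complex.im_sum] at him
  simp only [Complex.ofReal_re] at hre
  simp only [Complex.ofReal_im] at him
  refine ⟨u, hu, ?_, ?_⟩
  · have h2 : ∑ j, ((u * ζ j) * (u * ζ j)).im = 2 * ∑ j, (u * ζ j).re * (u * ζ j).im := by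
      rw [Finset.mul_sum]
      exact Finset.sum_congr rfl fun j _ => by rw [Complex.mul_im]; ring
    rw [h2] at him; linarith
  · have h1 : ∑ j, ((u * ζ j) * (u * ζ j)).re
        = (∑ j, (u * ζ j).re ^ 2) - ∑ j, (u * ζ j).im ^ 2 := by
      rw [← Finset.sum_sub_distrib]
      exact Finset.sum_congr rfl fun j _ => by rw [Complex.mul_re]; ring
    rw [h1] at hre; exact hre

lemma normsq_rot {u : ℂ} (hu : ‖u‖ = 1) (ζ : Cn n) (ξ η : Rn n)
    (hξ : ∀ j, ξ j = (u * ζ j).re) (hη : ∀ j, η j = (u * ζ j).im) :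
    ‖ξ‖ ^ 2 + ‖η‖ ^ 2 = ‖ζ‖ ^ 2 := by
  rw [normsq_R, normsq_R, normsq_C, ← Finset.sum_add_distrib]
  refine Finset.sum_congr rfl fun j _ => ?_
  rw [hξ j, hη j]
  have h1 : Complex.normSq (u * ζ j) = Complex.normSq (ζ j) := by
    rw [Complex.normSq_mul, ← Complex.sq_norm u, hu]; norm_num
  rw [Complex.normSq_apply, Complex.normSq_apply] at h1
  nlinarith [h1]

lemma mem_rot {u : ℂ} (hu : ‖u‖ = 1) (ζ : Cn n) (ξ η : Rn n)
    (hξ : ∀ j, ξ j = (u * ζ j).re) (hη : ∀ j, η j = (u * ζ j).im) :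
    ‖ξ‖ + ‖η‖ ∈ DS ζ := by
  have hu0 : u ≠ 0 := by intro h; simp [h] at hu
  have hinv : u⁻¹ * u = 1 := inv_mul_cancel₀ hu0
  refine ⟨2, ![u⁻¹, u⁻¹ * Complex.I], ![ξ, η], ?_, ?_⟩
  · ext j
    simp only [Fin.sum_univ_two, Matrix.cons_val_zero, Matrix.cons_val_one, Matrix.head_cons,
      PiLp.add_apply, PiLp.smul_apply, smul_eq_mul, toCn, PiLp.toLp_apply]
    rw [hξ j, hη j]
    have h := Complex.re_add_im (u * ζ j)
    linear_combination (-u⁻¹) * h - ζ j * hinv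
  · rw [Fin.sum_univ_two]
    simp [norm_mul, norm_inv, hu]

lemma dual_applied {ζ : Cn n} {u : ℂ} (hu : ‖u‖ = 1) (ξ η : Rn n)
    (hξ : ∀ j, ξ j = (u * ζ j).re) (hη : ∀ j, η j = (u * ζ j).im)
    (horth : ∑ j, ξ j * η j = 0)
    (hξp : 0 < ‖ξ‖) (hηp : 0 < ‖η‖) :
    ‖ξ‖ + ‖η‖ ≤ crossNorm (fun x => ‖x‖) ζ := by
  have hu0 : u ≠ 0 := by intro h; simp [h] at hu
  set a : Rn n := WithLp.toLp 2 fun j => ξ j / ‖ξ‖ with hadef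
  set b : Rn n := WithLp.toLp 2 fun j => η j / ‖η‖ with hbdef
  have hsa : ∑ j, a j ^ 2 = 1 := by
    have e : ∑ j, a j ^ 2 = (∑ j, ξ j ^ 2) / ‖ξ‖ ^ 2 := by
      rw [Finset.sum_div]
      exact Finset.sum_congr rfl fun j _ => by rw [hadef, PiLp.toLp_apply]; ring
    rw [e, ← normsq_R]
    exact div_self (by positivity)
  have hsb : ∑ j, b j ^ 2 = 1 := by
    have e : ∑ j, b j ^ 2 = (∑ j, η j ^ 2) / ‖η‖ ^ 2 := by
      rw [Finset.sum_div]
      exact Finset.sum_congr rfl fun j _ => by rw [hbdef, PiLp.toLp_apply]; ring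
    rw [e, ← normsq_R]
    exact div_self (by positivity)
  have hsab : ∑ j, a j * b j = 0 := by
    have e : ∑ j, a j * b j = (∑ j, ξ j * η j) / (‖ξ‖ * ‖η‖) := by
      rw [Finset.sum_div]
      exact Finset.sum_congr rfl fun j _ => by rw [hadef, hbdef, PiLp.toLp_apply, PiLp.toLp_apply]; ring
    rw [e, horth, zero_div]
  have hbd : ∀ ω : Rn n, (∑ j, ω j * a j)^2 + (∑ j, ω j * b j)^2 ≤ ‖ω‖^2 := by
    intro ω
    rw [normsq_R]
    exact bessel hsa.le hsb.le hsab
  have hdual := dual_lb a b hbd ζ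
  set ζ' : Cn n := WithLp.toLp 2 fun j => u * ζ j with hζ'def
  have hfac : ∑ j, ζ j * ((a j : ℂ) - Complex.I * (b j : ℂ))
      = u⁻¹ * ∑ j, ζ' j * ((a j : ℂ) - Complex.I * (b j : ℂ)) := by
    rw [Finset.mul_sum]
    refine Finset.sum_congr rfl fun j _ => ?_
    have hz : ζ' j = u * ζ j := rfl
    have hinv : u⁻¹ * u = 1 := inv_mul_cancel₀ hu0
    rw [hz]
    linear_combination (ζ j * ((a j : ℂ) - Complex.I * (b j : ℂ))) * hinv.symm
  have hre : (∑ j, ζ' j * ((a j : ℂ) - Complex.I * (b j : ℂ))).re = ‖ξ‖ + ‖η‖ := by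
    rw [B_re]
    have e1 : ∑ j, ((ζ' j).re * a j + (ζ' j).im * b j)
        = (∑ j, ξ j ^ 2) / ‖ξ‖ + (∑ j, η j ^ 2) / ‖η‖ := by
      rw [Finset.sum_div, Finset.sum_div, ← Finset.sum_add_distrib]
      refine Finset.sum_congr rfl fun j _ => ?_
      have h1 : (ζ' j).re = ξ j := (hξ j).symm
      have h2 : (ζ' j).im = η j := (hη j).symm
      rw [h1, h2, hadef, hbdef, PiLp.toLp_apply, PiLp.toLp_apply]
      ring
    rw [e1, ← normsq_R, ← normsq_R, sq, sq, mul_div_assoc, div_self (ne_of_gt hξp),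
      mul_div_assoc, div_self (ne_of_gt hηp), mul_one, mul_one]
  have him : (∑ j, ζ' j * ((a j : ℂ) - Complex.I * (b j : ℂ))).im = 0 := by
    rw [B_im]
    have e1 : ∑ j, ((ζ' j).im * a j - (ζ' j).re * b j)
        = (∑ j, ξ j * η j) / ‖ξ‖ - (∑ j, ξ j * η j) / ‖η‖ := by
      rw [Finset.sum_div, Finset.sum_div, ← Finset.sum_sub_distrib]
      refine Finset.sum_congr rfl fun j _ => ?_
      have h1 : (ζ' j).re = ξ j := (hξ j).symm
      have h2 : (ζ' j).im = η j := (hη j).symm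
      rw [h1, h2, hadef, hbdef, PiLp.toLp_apply, PiLp.toLp_apply]
      ring
    rw [e1, horth, zero_div, zero_div, sub_zero]
  have habs : ‖∑ j, ζ j * ((a j : ℂ) - Complex.I * (b j : ℂ))‖ = ‖ξ‖ + ‖η‖ := by
    rw [hfac, norm_mul, norm_inv, hu, inv_one, one_mul, Complex.norm_def,
      Complex.normSq_apply, hre, him, mul_zero, add_zero,
      Real.sqrt_mul_self (by positivity)]
  rw [habs] at hdual
  exact hdual

lemma mem_single (z : ℂ) (x : Rn n) : ‖z‖ * ‖x‖ ∈ DS (z • toCn x) := by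
  exact ⟨1, ![z], ![x], by simp [Fin.sum_univ_one], by simp [Fin.sum_univ_one]⟩

lemma add_le_sqrt_two {a b c : ℝ} (ha : 0 ≤ a) (hb : 0 ≤ b) (hc : 0 ≤ c)
    (h : a^2 + b^2 = c^2) : a + b ≤ Real.sqrt 2 * c := by
  have h2 : Real.sqrt 2 ^ 2 = 2 := Real.sq_sqrt (by norm_num)
  have h2' : 0 ≤ Real.sqrt 2 := Real.sqrt_nonneg 2
  nlinarith [sq_nonneg (a - b), sq_nonneg (Real.sqrt 2 * c - (a + b)), mul_nonneg h2' hc]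

lemma add_lt_sqrt_two {a b c : ℝ} (ha : 0 ≤ a) (hb : 0 ≤ b) (hc : 0 ≤ c)
    (h : a^2 + b^2 = c^2) (hne : a ≠ b) : a + b < Real.sqrt 2 * c := by
  have h2 : Real.sqrt 2 ^ 2 = 2 := Real.sq_sqrt (by norm_num)
  have h2' : 0 ≤ Real.sqrt 2 := Real.sqrt_nonneg 2
  have hab : 0 < (a - b)^2 := pow_two_pos_of_ne_zero (sub_ne_zero.mpr hne)
  nlinarith [sq_nonneg (Real.sqrt 2 * c - (a + b)), mul_nonneg h2' hc]

lemma eq_sqrt_two {a c : ℝ} (ha : 0 ≤ a) (hc : 0 ≤ c) (h : a^2 + a^2 = c^2) :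
    a + a = Real.sqrt 2 * c := by
  have h2 : (0:ℝ) ≤ 2 := by norm_num
  have : c = Real.sqrt 2 * a := by
    rw [← Real.sqrt_sq hc, ← Real.sqrt_sq ha, ← Real.sqrt_mul h2]
    congr 1
    linarith
  rw [this]
  have h3 : Real.sqrt 2 * Real.sqrt 2 = 2 := Real.mul_self_sqrt h2
  nlinarith

lemma lt_of_sq_lt {a c : ℝ} (h : c^2 < a^2) (ha : 0 ≤ a) (hc : 0 ≤ c) : c < a := by
  nlinarith

end CrossAux

lemma CrossAux.upper {n : ℕ} (ζ : Cn n) :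
    crossNorm (fun x => ‖x‖) ζ ≤ Real.sqrt 2 * ‖ζ‖ := by
  have hu : ‖(1 : ℂ)‖ = 1 := by simp
  obtain ⟨ξ, hξdef⟩ : ∃ ξ : Rn n, ∀ j, ξ j = ((1:ℂ) * ζ j).re := ⟨WithLp.toLp 2 fun j => ((1:ℂ) * ζ j).re, fun j => rfl⟩
  obtain ⟨η, hηdef⟩ : ∃ η : Rn n, ∀ j, η j = ((1:ℂ) * ζ j).im := ⟨WithLp.toLp 2 fun j => ((1:ℂ) * ζ j).im, fun j => rfl⟩
  have hle := CrossAux.cn_le_mem (CrossAux.mem_rot hu ζ ξ η hξdef hηdef)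
  have hns := CrossAux.normsq_rot hu ζ ξ η hξdef hηdef
  exact hle.trans (CrossAux.add_le_sqrt_two (norm_nonneg _) (norm_nonneg _) (norm_nonneg _) hns)

/-- Theorem 2.6, consequences: `|ζ| ≤ |ζ|_c ≤ √2 |ζ|` with the equality cases. -/
theorem crossNorm_comparison {n : ℕ} :
    (∀ ζ : Cn n, ‖ζ‖ ≤ crossNorm (fun x => ‖x‖) ζ) ∧
    (∀ ζ : Cn n, crossNorm (fun x => ‖x‖) ζ ≤ Real.sqrt 2 * ‖ζ‖) ∧
    (∀ ζ : Cn n, ‖ζ‖ = crossNorm (fun x => ‖x‖) ζ ↔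
      ∃ (z : ℂ) (x : Rn n), ζ = z • toCn x) ∧
    (∀ ζ : Cn n, crossNorm (fun x => ‖x‖) ζ = Real.sqrt 2 * ‖ζ‖ ↔ bform ζ ζ = 0) := by
  refine ⟨CrossAux.lower, CrossAux.upper, fun ζ => ⟨?_, ?_⟩, fun ζ => ⟨?_, ?_⟩⟩
  · -- ‖ζ‖ = |ζ|_c → ζ ∈ ℂℝⁿ
    intro hcn
    obtain ⟨u, hu, horth0, hdiff0⟩ := CrossAux.key ζ
    have hu0 : u ≠ 0 := by intro h; simp [h] at hu
    obtain ⟨ξ, hξdef⟩ : ∃ ξ : Rn n, ∀ j, ξ j = (u * ζ j).re := ⟨WithLp.toLp 2 fun j => (u * ζ j).re, fun j => rfl⟩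
    obtain ⟨η, hηdef⟩ : ∃ η : Rn n, ∀ j, η j = (u * ζ j).im := ⟨WithLp.toLp 2 fun j => (u * ζ j).im, fun j => rfl⟩
    have horth : ∑ j, ξ j * η j = 0 := by
      simp only [hξdef, hηdef]; exact horth0
    have hd : ‖ξ‖^2 - ‖η‖^2 = ‖bform ζ ζ‖ := by
      rw [CrossAux.normsq_R, CrossAux.normsq_R]
      simp only [hξdef, hηdef]; exact hdiff0
    by_cases hη0 : ‖η‖ = 0
    · refine ⟨u⁻¹, ξ, ?_⟩
      have hη' : η = 0 := norm_eq_zero.mp hη0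
      ext j
      have him0 : (u * ζ j).im = 0 := by
        rw [← hηdef j, hη']; rfl
      have h := Complex.re_add_im (u * ζ j)
      rw [him0, Complex.ofReal_zero, zero_mul, add_zero] at h
      have hinv : u⁻¹ * u = 1 := inv_mul_cancel₀ hu0
      show ζ j = u⁻¹ * ((ξ j : ℝ) : ℂ)
      rw [hξdef j]
      linear_combination (-u⁻¹) * h - ζ j * hinv
    · exfalso
      have hηp : 0 < ‖η‖ := (norm_nonneg _).lt_of_ne (Ne.symm hη0)
      have habs : 0 ≤ ‖bform ζ ζ‖ := norm_nonneg _
      have hξp : 0 < ‖ξ‖ := by nlinarith [norm_nonneg ξ]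
      have hdual := CrossAux.dual_applied hu ξ η hξdef hηdef horth hξp hηp
      have hns := CrossAux.normsq_rot hu ζ ξ η hξdef hηdef
      have hlt : ‖ζ‖ < ‖ξ‖ + ‖η‖ :=
        CrossAux.lt_of_sq_lt (by nlinarith [mul_pos hξp hηp]) (by positivity) (norm_nonneg ζ)
      rw [← hcn] at hdual
      linarith
  · -- ζ = z • toCn x → equality
    rintro ⟨z, x, rfl⟩
    refine le_antisymm (CrossAux.lower _) ?_
    have h1 := CrossAux.cn_le_mem (CrossAux.mem_single z x)
    have h2 : ‖z • toCn x‖ = ‖z‖ * ‖x‖ := by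
      rw [norm_smul, CrossAux.norm_toCn]
    rw [h2]; exact h1
  · -- |ζ|_c = √2 ‖ζ‖ → bform ζ ζ = 0
    intro hcn
    by_contra hbf
    obtain ⟨u, hu, horth0, hdiff0⟩ := CrossAux.key ζ
    obtain ⟨ξ, hξdef⟩ : ∃ ξ : Rn n, ∀ j, ξ j = (u * ζ j).re := ⟨WithLp.toLp 2 fun j => (u * ζ j).re, fun j => rfl⟩
    obtain ⟨η, hηdef⟩ : ∃ η : Rn n, ∀ j, η j = (u * ζ j).im := ⟨WithLp.toLp 2 fun j => (u * ζ j).im, fun j => rfl⟩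
    have habs : 0 < ‖bform ζ ζ‖ := norm_pos_iff.mpr hbf
    have hd : ‖ξ‖^2 - ‖η‖^2 = ‖bform ζ ζ‖ := by
      rw [CrossAux.normsq_R, CrossAux.normsq_R]
      simp only [hξdef, hηdef]; exact hdiff0
    have hne : ‖ξ‖ ≠ ‖η‖ := by
      intro he; rw [he] at hd; simp at hd; linarith
    have hns := CrossAux.normsq_rot hu ζ ξ η hξdef hηdef
    have hlt := CrossAux.add_lt_sqrt_two (norm_nonneg ξ) (norm_nonneg η) (norm_nonneg ζ) hns hne
    have hle := CrossAux.cn_le_mem (CrossAux.mem_rot hu ζ ξ η hξdef hηdef)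
    rw [hcn] at hle
    linarith
  · -- bform ζ ζ = 0 → |ζ|_c = √2 ‖ζ‖
    intro hbf
    obtain ⟨u, hu, horth0, hdiff0⟩ := CrossAux.key ζ
    obtain ⟨ξ, hξdef⟩ : ∃ ξ : Rn n, ∀ j, ξ j = (u * ζ j).re := ⟨WithLp.toLp 2 fun j => (u * ζ j).re, fun j => rfl⟩
    obtain ⟨η, hηdef⟩ : ∃ η : Rn n, ∀ j, η j = (u * ζ j).im := ⟨WithLp.toLp 2 fun j => (u * ζ j).im, fun j => rfl⟩
    have horth : ∑ j, ξ j * η j = 0 := by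
      simp only [hξdef, hηdef]; exact horth0
    have hd : ‖ξ‖^2 - ‖η‖^2 = 0 := by
      rw [CrossAux.normsq_R, CrossAux.normsq_R]
      rw [hbf] at hdiff0
      simp only [hξdef, hηdef]
      simpa using hdiff0
    have heq : ‖ξ‖ = ‖η‖ := by
      nlinarith [norm_nonneg ξ, norm_nonneg η]
    have hns := CrossAux.normsq_rot hu ζ ξ η hξdef hηdef
    by_cases hξ0 : ‖ξ‖ = 0
    · have hζ0 : ‖ζ‖ = 0 := by nlinarith [norm_nonneg ζ]
      have h1 := CrossAux.lower ζ
      have h2 := CrossAux.upper ζ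
      rw [hζ0] at h1 h2 ⊢
      rw [mul_zero] at h2 ⊢
      linarith
    · have hξp : 0 < ‖ξ‖ := (norm_nonneg _).lt_of_ne (Ne.symm hξ0)
      have hηp : 0 < ‖η‖ := heq ▸ hξp
      have hdual := CrossAux.dual_applied hu ξ η hξdef hηdef horth hξp hηp
      have hupper := CrossAux.upper ζ
      have hns2 : ‖ξ‖^2 + ‖ξ‖^2 = ‖ζ‖^2 := by rw [heq] at hns ⊢; exact hns
      have heq2 := CrossAux.eq_sqrt_two hξp.le (norm_nonneg ζ) hns2
      have : ‖ξ‖ + ‖η‖ = Real.sqrt 2 * ‖ζ‖ := by rw [← heq]; exact heq2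
      linarith


end
end
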